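/- Let c ∈ (0,1], and let m, N be integers with 1 ≤ m ≤ cN/100. Let G be a c-expander graph on N vertices with minimum degree at least 3, and let E_0 be a set of m edges of G. Then there exists a subgraph G′ of G − E_0 (a graph whose vertex set is a subset of V(G) and whose edge set is a subset of E(G) ∖ E_0) such that: (i) |V(G′)| ≥ N/2; (ii) G′ has minimum degree at least 2; (iii) G′ contains at least N/4 vertices of degree (in G′) at least 3; (iv) G′ is a (c/10)-expander. -/

import Mathlib

/-- The set of edges of `G` with exactly one endpoint in `S`. -/
def edgeBoundary {V : Type*} (G : SimpleGraph V) (S : Set V) : Set (Sym2 V) :=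
  {e | ∃ a b, e = s(a, b) ∧ G.Adj a b ∧ a ∈ S ∧ b ∉ S}

/-- `G` is an `α`-expander: every nonempty vertex set `S` with `|S| ≤ |V|/2` satisfies
`e(S, Sᶜ) ≥ α · Σ_{v ∈ S} deg v`. -/
def IsExpander {V : Type*} [Fintype V] (G : SimpleGraph V) (α : ℝ) : Prop :=
  ∀ S : Finset V, S.Nonempty → 2 * S.card ≤ Fintype.card V →
    α * (∑ v ∈ S, (Nat.card (G.neighborSet v) : ℝ)) ≤ (Nat.card (edgeBoundary G ↑S) : ℝ)

set_option linter.unusedSectionVars false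
set_option maxHeartbeats 1000000

open Finset

section NEHelpers

variable {W : Type*} [Fintype W] [DecidableEq W]

open Classical in
/-- number of ordered adjacent pairs in `A × B`. -/
noncomputable def nE (H : SimpleGraph W) (A B : Finset W) : ℕ :=
  ∑ a ∈ A, (B.filter fun b => H.Adj a b).card

open Classical in
lemma nE_eq_sum_sum (H : SimpleGraph W) (A B : Finset W) :
    nE H A B = ∑ a ∈ A, ∑ b ∈ B, if H.Adj a b then 1 else 0 := by
  unfold nE
  refine Finset.sum_congr rfl fun a _ => ?_
  rw [Finset.card_filter]

open Classical in
lemma nE_singleton (H : SimpleGraph W) (v : W) (B : Finset W) :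
    nE H {v} B = (B.filter fun b => H.Adj v b).card := by
  unfold nE; rw [Finset.sum_singleton]

open Classical in
lemma nE_eq_sum_singleton (H : SimpleGraph W) (A B : Finset W) :
    nE H A B = ∑ a ∈ A, nE H {a} B := by
  unfold nE
  refine Finset.sum_congr rfl fun a _ => ?_
  rw [Finset.sum_singleton]

lemma nE_symm (H : SimpleGraph W) (A B : Finset W) : nE H A B = nE H B A := by
  classical
  rw [nE_eq_sum_sum, nE_eq_sum_sum, Finset.sum_comm]
  refine Finset.sum_congr rfl fun b _ => Finset.sum_congr rfl fun a _ => ?_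
  simp only [H.adj_comm]

open Classical in
lemma nE_union_right (H : SimpleGraph W) (A : Finset W) {B C : Finset W} (h : Disjoint B C) :
    nE H A (B ∪ C) = nE H A B + nE H A C := by
  unfold nE
  rw [← Finset.sum_add_distrib]
  refine Finset.sum_congr rfl fun a _ => ?_
  rw [Finset.filter_union, Finset.card_union_of_disjoint]
  exact Finset.disjoint_filter_filter h

lemma nE_union_left (H : SimpleGraph W) {A B : Finset W} (C : Finset W) (h : Disjoint A B) :
    nE H (A ∪ B) C = nE H A C + nE H B C := by
  classical
  unfold nE
  exact Finset.sum_union h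

lemma nE_mono_left (H : SimpleGraph W) {A A' : Finset W} (B : Finset W) (h : A ⊆ A') :
    nE H A B ≤ nE H A' B := by
  classical
  exact Finset.sum_le_sum_of_subset h

lemma nE_mono_right (H : SimpleGraph W) (A : Finset W) {B B' : Finset W} (h : B ⊆ B') :
    nE H A B ≤ nE H A B' := by
  classical
  exact Finset.sum_le_sum fun a _ => Finset.card_le_card (Finset.filter_subset_filter _ h)

lemma nE_singleton_self (H : SimpleGraph W) (v : W) : nE H {v} {v} = 0 := by
  classical
  rw [nE_singleton]
  simp [Finset.filter_singleton, H.irrefl]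

open Classical in
lemma nE_le_of_le {H H' : SimpleGraph W} (hle : ∀ a b, H.Adj a b → H'.Adj a b)
    (A B : Finset W) : nE H A B ≤ nE H' A B := by
  unfold nE
  refine Finset.sum_le_sum fun a _ => Finset.card_le_card fun b hb => ?_
  simp only [Finset.mem_filter] at hb ⊢
  exact ⟨hb.1, hle _ _ hb.2⟩

lemma nE_empty_left (H : SimpleGraph W) (B : Finset W) : nE H ∅ B = 0 := by
  unfold nE; simp

open Classical in
lemma nE_eq_card_product (H : SimpleGraph W) (A B : Finset W) :
    nE H A B = ((A ×ˢ B).filter fun p => H.Adj p.1 p.2).card := by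
  rw [nE_eq_sum_sum, Finset.card_filter, Finset.sum_product]

open Classical in
lemma card_product_filter (A B : Finset W) (P : W → W → Prop) :
    ((A ×ˢ B).filter fun p => P p.1 p.2).card = ∑ a ∈ A, (B.filter fun b => P a b).card := by
  rw [Finset.card_filter, Finset.sum_product]
  exact Finset.sum_congr rfl fun a _ => (Finset.card_filter _ _).symm

open Classical in
lemma sum_card_cross_le {A B : Finset W} (hAB : Disjoint A B) (P : W → W → Prop)
    (T : Finset (Sym2 W)) (hP : ∀ a b, P a b → s(a, b) ∈ T) :
    ∑ a ∈ A, (B.filter fun b => P a b).card ≤ T.card := by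
  rw [← card_product_filter]
  refine Finset.card_le_card_of_injOn (fun p => s(p.1, p.2)) ?_ ?_
  · rintro ⟨a, b⟩ hp
    simp only [Finset.mem_coe, Finset.mem_filter] at hp
    exact hP _ _ hp.2
  · rintro ⟨a, b⟩ hp ⟨a', b'⟩ hq h
    simp only [Finset.coe_filter, Set.mem_setOf_eq, Finset.mem_product] at hp hq
    rw [Sym2.eq_iff] at h
    rcases h with ⟨h1, h2⟩ | ⟨h1, h2⟩
    · exact Prod.ext h1 h2
    · exfalso
      have h1' : a = b' := h1
      exact Finset.disjoint_left.1 hAB hp.1.1 (h1' ▸ hq.1.2)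

open Classical in
lemma sum_card_double_le (P : W → W → Prop) (T : Finset (Sym2 W))
    (hP : ∀ a b, P a b → s(a, b) ∈ T) :
    ∑ a ∈ (univ : Finset W), ((univ : Finset W).filter fun b => P a b).card ≤ 2 * T.card := by
  rw [← card_product_filter]
  set Q := ((univ : Finset W) ×ˢ univ).filter fun p => P p.1 p.2 with hQ
  have himg : Q.image (fun p => s(p.1, p.2)) ⊆ T := by
    intro e he
    obtain ⟨⟨a, b⟩, hp, rfl⟩ := Finset.mem_image.1 he
    simp only [hQ, Finset.mem_filter] at hp
    exact hP _ _ hp.2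
  calc Q.card = ∑ e ∈ Q.image (fun p => s(p.1, p.2)),
        (Q.filter fun p => s(p.1, p.2) = e).card := Finset.card_eq_sum_card_image _ _
    _ ≤ ∑ _e ∈ Q.image (fun p => s(p.1, p.2)), 2 := by
        refine Finset.sum_le_sum fun e he => ?_
        obtain ⟨⟨a, b⟩, _, rfl⟩ := Finset.mem_image.1 he
        have hsub : (Q.filter fun p => s(p.1, p.2) = s(a, b)) ⊆ {(a, b), (b, a)} := by
          rintro ⟨x, y⟩ hx
          simp only [Finset.mem_filter] at hx
          rw [Sym2.eq_iff] at hx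
          rcases hx.2 with ⟨rfl, rfl⟩ | ⟨rfl, rfl⟩
          · simp
          · simp
        calc (Q.filter fun p => s(p.1, p.2) = s(a, b)).card ≤ _ := Finset.card_le_card hsub
          _ ≤ 2 := Finset.card_insert_le _ _ |>.trans (by simp)
    _ = 2 * (Q.image (fun p => s(p.1, p.2))).card := by rw [Finset.sum_const, smul_eq_mul, mul_comm]
    _ ≤ 2 * T.card := Nat.mul_le_mul_left 2 (Finset.card_le_card himg)

open Classical in
lemma nat_card_edgeBoundary (H : SimpleGraph W) (S : Finset W) :
    Nat.card (edgeBoundary H ↑S) = nE H S (univ \ S) := by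
  set P := (S ×ˢ (univ \ S)).filter fun p => H.Adj p.1 p.2 with hP
  have hinj : Set.InjOn (fun p : W × W => s(p.1, p.2)) ↑P := by
    rintro ⟨a, b⟩ hp ⟨a', b'⟩ hq h
    simp only [hP, Finset.coe_filter, Set.mem_setOf_eq, Finset.mem_product, Finset.mem_sdiff,
      Finset.mem_univ, true_and] at hp hq
    rw [Sym2.eq_iff] at h
    rcases h with ⟨h1, h2⟩ | ⟨h1, h2⟩
    · exact Prod.ext h1 h2
    · exfalso
      have h1' : a = b' := h1
      exact hq.1.2 (h1' ▸ hp.1.1)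
  have himg : edgeBoundary H ↑S = ↑(P.image fun p => s(p.1, p.2)) := by
    ext e
    simp only [edgeBoundary, Set.mem_setOf_eq, Finset.coe_image, Set.mem_image, Finset.mem_coe,
      hP, Finset.mem_filter, Finset.mem_product, Finset.mem_sdiff, Finset.mem_univ, true_and]
    constructor
    · rintro ⟨a, b, rfl, hadj, ha, hb⟩
      exact ⟨(a, b), ⟨⟨ha, hb⟩, hadj⟩, rfl⟩
    · rintro ⟨⟨a, b⟩, ⟨⟨ha, hb⟩, hadj⟩, rfl⟩
      exact ⟨a, b, rfl, hadj, ha, hb⟩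
  rw [himg, Nat.card_coe_set_eq, Set.ncard_coe_finset,
    Finset.card_image_of_injOn hinj, nE_eq_card_product]

open Classical in
lemma nat_card_neighborSet (H : SimpleGraph W) (v : W) :
    Nat.card (H.neighborSet v) = nE H {v} univ := by
  have h : H.neighborSet v = ↑((univ : Finset W).filter fun b => H.Adj v b) := by
    ext w; simp
  rw [h, Nat.card_coe_set_eq, Set.ncard_coe_finset, nE_singleton]

open Classical in
lemma sum_nat_card_neighborSet (H : SimpleGraph W) (S : Finset W) :
    ∑ v ∈ S, Nat.card (H.neighborSet v) = nE H S univ := by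
  unfold nE
  refine Finset.sum_congr rfl fun v _ => ?_
  have := nat_card_neighborSet H v
  rwa [nE_singleton] at this

lemma isExpander_nE {H : SimpleGraph W} {α : ℝ} (h : IsExpander H α) {S : Finset W}
    (h1 : S.Nonempty) (h2 : 2 * S.card ≤ Fintype.card W) :
    α * (nE H S univ : ℝ) ≤ (nE H S (univ \ S) : ℝ) := by
  have h3 := h S h1 h2
  rw [nat_card_edgeBoundary] at h3
  rw [show (∑ v ∈ S, ((Nat.card (H.neighborSet v) : ℝ))) = ((nE H S univ : ℕ) : ℝ) by
    rw [← sum_nat_card_neighborSet]; push_cast; rfl] at h3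
  exact h3

lemma card_filter_one_le_sum (f : W → ℕ) (s : Finset W) :
    (s.filter fun v => 1 ≤ f v).card ≤ ∑ v ∈ s, f v := by
  classical
  calc (s.filter fun v => 1 ≤ f v).card = ∑ v ∈ s.filter fun v => 1 ≤ f v, 1 := by
        rw [Finset.card_eq_sum_ones]
    _ ≤ ∑ v ∈ s.filter fun v => 1 ≤ f v, f v := Finset.sum_le_sum fun v hv =>
        (Finset.mem_filter.1 hv).2
    _ ≤ ∑ v ∈ s, f v := Finset.sum_le_sum_of_subset (Finset.filter_subset _ _)

lemma card_subtype_filter (U : Finset W) (p : W → Prop) [DecidablePred p] :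
    (((univ : Finset ↥U)).filter fun (u : ↥U) => p ↑u).card = (U.filter p).card := by
  calc (((univ : Finset ↥U)).filter fun (u : ↥U) => p ↑u).card
      = Fintype.card {u : ↥U // p ↑u} := (Fintype.card_subtype _).symm
    _ = Fintype.card {x : W // x ∈ U ∧ p x} :=
        Fintype.card_congr (Equiv.subtypeSubtypeEquivSubtypeInter _ _)
    _ = ((univ : Finset W).filter fun x => x ∈ U ∧ p x).card := Fintype.card_subtype _
    _ = (U.filter p).card := by congr 1; ext x; simp

/-- the graph of removed edges -/
def remGraph (G : SimpleGraph W) (E₀ : Finset (Sym2 W)) : SimpleGraph W where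
  Adj a b := G.Adj a b ∧ s(a, b) ∈ E₀
  symm := by
    constructor
    intro a b ⟨h1, h2⟩
    exact ⟨h1.symm, by rwa [Sym2.eq_swap] at h2⟩
  loopless := ⟨fun a h => G.irrefl h.1⟩

open Classical in
lemma nE_split (G : SimpleGraph W) (E₀ : Finset (Sym2 W)) (A B : Finset W) :
    nE G A B = nE (G.deleteEdges ↑E₀) A B + nE (remGraph G E₀) A B := by
  unfold nE
  rw [← Finset.sum_add_distrib]
  refine Finset.sum_congr rfl fun a _ => ?_
  have h1 : (B.filter fun b => (G.deleteEdges ↑E₀).Adj a b)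
      = (B.filter fun b => G.Adj a b).filter fun b => s(a, b) ∉ E₀ := by
    rw [Finset.filter_filter]
    refine Finset.filter_congr fun b _ => ?_
    rw [SimpleGraph.deleteEdges_adj]
    simp
  have h2 : (B.filter fun b => (remGraph G E₀).Adj a b)
      = (B.filter fun b => G.Adj a b).filter fun b => ¬ s(a, b) ∉ E₀ := by
    rw [Finset.filter_filter]
    refine Finset.filter_congr fun b _ => ?_
    constructor
    · rintro ⟨h, h'⟩; exact ⟨h, not_not_intro h'⟩
    · rintro ⟨h, h'⟩; exact ⟨h, not_not.1 h'⟩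
  rw [← Finset.card_filter_add_card_filter_not (s := B.filter fun b => G.Adj a b) (p := fun b => s(a, b) ∉ E₀), ← h1, ← h2]
  congr!

end NEHelpers
open Finset in
theorem stmt6 (c : ℝ) (hc0 : 0 < c) (hc1 : c ≤ 1) (m N : ℕ) (hm1 : 1 ≤ m)
    (hmc : (m : ℝ) ≤ c * N / 100)
    {V : Type*} [Fintype V] [DecidableEq V] (hN : Fintype.card V = N)
    (G : SimpleGraph V) (hexp : IsExpander G c)
    (hδ : ∀ v : V, 3 ≤ Nat.card (G.neighborSet v))
    (E₀ : Finset (Sym2 V)) (hE₀ : (↑E₀ : Set (Sym2 V)) ⊆ G.edgeSet) (hE₀card : E₀.card = m) :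
    ∃ (U : Finset V) (G' : SimpleGraph ↥U),
      (∀ a b : ↥U, G'.Adj a b → G.Adj ↑a ↑b ∧ s((a : V), (b : V)) ∉ E₀) ∧
      (N : ℝ) / 2 ≤ (U.card : ℝ) ∧
      (∀ v : ↥U, 2 ≤ Nat.card (G'.neighborSet v)) ∧
      (N : ℝ) / 4 ≤ (Nat.card {v : ↥U // 3 ≤ Nat.card (G'.neighborSet v)} : ℝ) ∧
      IsExpander G' (c / 10) := by
  classical
  set G₀ := G.deleteEdges ↑E₀ with hG₀def
  set R := remGraph G E₀ with hRdef
  have hmR : (1 : ℝ) ≤ (m : ℝ) := by exact_mod_cast hm1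
  have hN0 : (0 : ℝ) ≤ (N : ℝ) := Nat.cast_nonneg _
  have hN100 : (100 : ℝ) ≤ (N : ℝ) := by nlinarith
  -- basic counting facts
  have h_split : ∀ A B : Finset V, nE G A B = nE G₀ A B + nE R A B := nE_split G E₀
  have h_G₀_le : ∀ a b : V, G₀.Adj a b → G.Adj a b := fun a b h =>
    (SimpleGraph.deleteEdges_adj.mp h).1
  have h_Rcross : ∀ A : Finset V, nE R A (univ \ A) ≤ m := by
    intro A
    have h := sum_card_cross_le (A := A) (B := univ \ A) Finset.disjoint_sdiff
      (fun a b => R.Adj a b) E₀ (fun a b h => h.2)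
    rw [hE₀card] at h
    unfold nE
    exact h
  have h_R2 : nE R univ univ ≤ 2 * m := by
    have h := sum_card_double_le (fun a b : V => R.Adj a b) E₀ (fun a b h => h.2)
    rw [hE₀card] at h
    unfold nE
    exact h
  have h_degG : ∀ v : V, 3 ≤ nE G {v} univ := by
    intro v
    have := hδ v
    rwa [nat_card_neighborSet] at this
  have h_volG_ge : ∀ D : Finset V, 3 * D.card ≤ nE G D univ := by
    intro D
    rw [nE_eq_sum_singleton]
    calc 3 * D.card = ∑ _v ∈ D, 3 := by rw [Finset.sum_const, smul_eq_mul, mul_comm]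
      _ ≤ ∑ v ∈ D, nE G {v} univ := Finset.sum_le_sum fun v _ => h_degG v
  have h_sd : ∀ U : Finset V, univ \ (univ \ U) = U := by
    intro U; rw [Finset.sdiff_sdiff_self_left, Finset.univ_inter]
  have h_NcardV : (univ : Finset V).card = N := by rw [Finset.card_univ, hN]
  -- the invariant
  set Inv : Finset V → Prop := fun U =>
    (nE G₀ (univ \ U) U : ℝ) ≤ c / 10 * (nE G₀ (univ \ U) univ : ℝ) + (nE R (univ \ U) univ : ℝ)
    with hInvDef
  -- consequences of the invariant for small D
  have hsmall : ∀ U : Finset V, Inv U → 2 * (univ \ U).card ≤ N →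
      c * (nE G (univ \ U) univ : ℝ) ≤ 10 * m / 3 ∧
      c * ((univ \ U).card : ℝ) ≤ 10 * m / 9 ∧
      (nE G₀ (univ \ U) U : ℝ) ≤ 7 * m / 3 := by
    intro U hInv hDcard
    rcases Finset.eq_empty_or_nonempty (univ \ U) with hD | hD
    · rw [hD]
      simp only [nE_empty_left, Finset.card_empty, Nat.cast_zero, mul_zero]
      norm_num
      constructor
      · linarith
      · constructor <;> linarith
    · have hexpD := isExpander_nE hexp hD (by rw [hN]; exact hDcard)
      rw [h_sd U] at hexpD
      have hsplitD : (nE G (univ \ U) U : ℝ)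
          ≤ (nE G₀ (univ \ U) U : ℝ) + m := by
        have h1 := h_split (univ \ U) U
        have h2 : nE R (univ \ U) U ≤ m := by
          have := h_Rcross (univ \ U)
          rwa [h_sd U] at this
        have : nE G (univ \ U) U ≤ nE G₀ (univ \ U) U + m := by omega
        exact_mod_cast this
      have hvol0 : (nE G₀ (univ \ U) univ : ℝ) ≤ (nE G (univ \ U) univ : ℝ) := by
        exact_mod_cast nE_le_of_le h_G₀_le (univ \ U) univ
      have hRD : (nE R (univ \ U) univ : ℝ) ≤ 2 * m := by
        have h1 : nE R (univ \ U) univ ≤ nE R univ univ :=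
          nE_mono_left R univ (Finset.subset_univ _)
        have := h1.trans h_R2
        exact_mod_cast this
      have hInv' := hInv
      have key : c * (nE G (univ \ U) univ : ℝ)
          ≤ c / 10 * (nE G (univ \ U) univ : ℝ) + 3 * m := by
        have hm1 : c / 10 * (nE G₀ (univ \ U) univ : ℝ)
            ≤ c / 10 * (nE G (univ \ U) univ : ℝ) := by
          apply mul_le_mul_of_nonneg_left hvol0
          positivity
        linarith
      have hvol : c * (nE G (univ \ U) univ : ℝ) ≤ 10 * m / 3 := by linarith
      have hcard : c * ((univ \ U).card : ℝ) ≤ 10 * m / 9 := by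
        have h3 : (3 : ℝ) * ((univ \ U).card : ℝ) ≤ (nE G (univ \ U) univ : ℝ) := by
          exact_mod_cast h_volG_ge (univ \ U)
        nlinarith
      refine ⟨hvol, hcard, ?_⟩
      have hm2 : c / 10 * (nE G₀ (univ \ U) univ : ℝ)
          ≤ c / 10 * (nE G (univ \ U) univ : ℝ) := by
        apply mul_le_mul_of_nonneg_left hvol0
        positivity
      linarith
  -- set decompositions
  have h_sdiff_decomp : ∀ S U : Finset V, S ⊆ U → univ \ S = (U \ S) ∪ (univ \ U) := by
    intro S U h
    ext x
    simp only [Finset.mem_sdiff, Finset.mem_union, Finset.mem_univ, true_and]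
    constructor
    · intro hx
      by_cases hU : x ∈ U
      · exact Or.inl ⟨hU, hx⟩
      · exact Or.inr hU
    · rintro (⟨_, hx⟩ | hx)
      · exact hx
      · exact fun hc => hx (h hc)
  have h_compl_sdiff : ∀ S U : Finset V, S ⊆ U → univ \ (U \ S) = (univ \ U) ∪ S := by
    intro S U h
    ext x
    simp only [Finset.mem_sdiff, Finset.mem_union, Finset.mem_univ, true_and]
    constructor
    · intro hx
      by_cases hU : x ∈ U
      · right
        by_contra hS
        exact hx ⟨hU, hS⟩
      · exact Or.inl hU
    · rintro (hx | hx)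
      · exact fun hc => hx hc.1
      · exact fun hc => hc.2 hx
  -- main cleaning induction
  have main : ∀ n : ℕ, ∀ U : Finset V, U.card = n → Inv U →
      c * ((univ \ U).card : ℝ) ≤ 10 * m / 9 →
      ∃ U', U' ⊆ U ∧ Inv U' ∧ c * ((univ \ U').card : ℝ) ≤ 10 * m / 9 ∧
        (∀ S, S ⊆ U' → S.Nonempty → 2 * S.card ≤ U'.card →
          (c / 10) * (nE G₀ S U' : ℝ) ≤ (nE G₀ S (U' \ S) : ℝ)) ∧
        (∀ v ∈ U', 2 ≤ nE G₀ {v} U') := by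
    intro n
    induction n using Nat.strong_induction_on with
    | _ n IH =>
    intro U hUcard hInv hsize
    -- derive basic size facts
    have hDle : ((univ \ U).card : ℝ) ≤ (N : ℝ) / 90 := by
      have h1 : c * ((univ \ U).card : ℝ) ≤ c * ((N : ℝ) / 90) := by
        calc c * ((univ \ U).card : ℝ) ≤ 10 * m / 9 := hsize
          _ ≤ c * ((N : ℝ) / 90) := by linarith
      exact le_of_mul_le_mul_left h1 hc0
    have hDcard : 2 * (univ \ U).card ≤ N := by
      have : (2 * (univ \ U).card : ℝ) ≤ (N : ℝ) := by push_cast; linarith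
      exact_mod_cast this
    have hb₀ := (hsmall U hInv hDcard).2.2
    by_cases h1 : ∃ S, S ⊆ U ∧ S.Nonempty ∧ 2 * S.card ≤ U.card ∧
        (nE G₀ S (U \ S) : ℝ) < c / 10 * (nE G₀ S U : ℝ)
    · obtain ⟨S, hSU, hSne, hScard, hSbad⟩ := h1
      have hdisjDU : Disjoint (univ \ U) U := Finset.sdiff_disjoint
      have hdisjDS : Disjoint (univ \ U) S := hdisjDU.mono_right hSU
      have hD' : univ \ (U \ S) = (univ \ U) ∪ S := h_compl_sdiff S U hSU
      -- natural number identities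
      have eq1 : nE G₀ (univ \ (U \ S)) (U \ S)
          = nE G₀ (univ \ U) (U \ S) + nE G₀ S (U \ S) := by
        rw [hD', nE_union_left _ _ hdisjDS]
      have eq2 : nE G₀ (univ \ U) U = nE G₀ (univ \ U) (U \ S) + nE G₀ (univ \ U) S := by
        have h := nE_union_right G₀ (univ \ U)
          (Finset.sdiff_disjoint : Disjoint (U \ S) S)
        rwa [Finset.sdiff_union_of_subset hSU] at h
      have eq3 : nE G₀ S univ = nE G₀ S U + nE G₀ S (univ \ U) := by
        have h := nE_union_right G₀ S
          (Finset.disjoint_sdiff : Disjoint U (univ \ U))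
        rwa [Finset.union_sdiff_of_subset (Finset.subset_univ U)] at h
      have eq4 : nE G₀ (univ \ (U \ S)) univ
          = nE G₀ (univ \ U) univ + nE G₀ S univ := by
        rw [hD', nE_union_left _ _ hdisjDS]
      have eq5 : nE R (univ \ (U \ S)) univ
          = nE R (univ \ U) univ + nE R S univ := by
        rw [hD', nE_union_left _ _ hdisjDS]
      have eq6 : nE G₀ (univ \ U) S = nE G₀ S (univ \ U) := nE_symm _ _ _
      -- real versions
      have e1 : (nE G₀ (univ \ (U \ S)) (U \ S) : ℝ)
          = (nE G₀ (univ \ U) (U \ S) : ℝ) + (nE G₀ S (U \ S) : ℝ) := by exact_mod_cast eq1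
      have e2 : (nE G₀ (univ \ U) U : ℝ)
          = (nE G₀ (univ \ U) (U \ S) : ℝ) + (nE G₀ (univ \ U) S : ℝ) := by exact_mod_cast eq2
      have e3 : (nE G₀ S univ : ℝ) = (nE G₀ S U : ℝ) + (nE G₀ S (univ \ U) : ℝ) := by
        exact_mod_cast eq3
      have e4 : (nE G₀ (univ \ (U \ S)) univ : ℝ)
          = (nE G₀ (univ \ U) univ : ℝ) + (nE G₀ S univ : ℝ) := by exact_mod_cast eq4
      have e5 : (nE R (univ \ (U \ S)) univ : ℝ)
          = (nE R (univ \ U) univ : ℝ) + (nE R S univ : ℝ) := by exact_mod_cast eq5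
      have e6 : (nE G₀ (univ \ U) S : ℝ) = (nE G₀ S (univ \ U) : ℝ) := by exact_mod_cast eq6
      have he3 : c / 10 * (nE G₀ S univ : ℝ)
          = c / 10 * (nE G₀ S U : ℝ) + c / 10 * (nE G₀ S (univ \ U) : ℝ) := by
        rw [e3]; ring
      have hnn1 : (0 : ℝ) ≤ (nE G₀ S (univ \ U) : ℝ) := Nat.cast_nonneg _
      have hnn2 : (0 : ℝ) ≤ c / 10 * (nE G₀ S (univ \ U) : ℝ) := by positivity
      have hnn3 : (0 : ℝ) ≤ (nE R S univ : ℝ) := Nat.cast_nonneg _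
      -- the invariant for U \ S
      have hInv' : Inv (U \ S) := by
        rw [hInvDef]
        dsimp only
        rw [e1, e4, e5]
        have hI : (nE G₀ (univ \ U) U : ℝ)
            ≤ c / 10 * (nE G₀ (univ \ U) univ : ℝ) + (nE R (univ \ U) univ : ℝ) := hInv
        linarith
      -- bound on |S| via expansion of S
      have hexpS := isExpander_nE hexp hSne
        (by rw [hN]
            exact hScard.trans (le_of_le_of_eq (Finset.card_le_univ U) h_NcardV))
      have hsplitS : (nE G S (univ \ S) : ℝ) ≤ (nE G₀ S (univ \ S) : ℝ) + m := by
        have hs := h_split S (univ \ S)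
        have hr := h_Rcross S
        have : nE G S (univ \ S) ≤ nE G₀ S (univ \ S) + m := by omega
        exact_mod_cast this
      have hsplitS2 : nE G₀ S (univ \ S) = nE G₀ S (U \ S) + nE G₀ S (univ \ U) := by
        rw [h_sdiff_decomp S U hSU]
        refine nE_union_right _ _ ?_
        rw [Finset.disjoint_left]
        intro x hx hx2
        exact (Finset.mem_sdiff.1 hx2).2 (Finset.mem_sdiff.1 hx).1
      have hsplitS2R : (nE G₀ S (univ \ S) : ℝ)
          = (nE G₀ S (U \ S) : ℝ) + (nE G₀ S (univ \ U) : ℝ) := by exact_mod_cast hsplitS2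
      have hSD : (nE G₀ S (univ \ U) : ℝ) ≤ (nE G₀ (univ \ U) U : ℝ) := by
        have h1 : nE G₀ S (univ \ U) = nE G₀ (univ \ U) S := (nE_symm _ _ _).symm
        have h2 : nE G₀ (univ \ U) S ≤ nE G₀ (univ \ U) U := nE_mono_right _ _ hSU
        exact_mod_cast h1 ▸ h2
      have hSUvol : (nE G₀ S U : ℝ) ≤ (nE G S univ : ℝ) := by
        have h1 : nE G₀ S U ≤ nE G₀ S univ := nE_mono_right _ _ (Finset.subset_univ _)
        have h2 : nE G₀ S univ ≤ nE G S univ := nE_le_of_le h_G₀_le _ _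
        exact_mod_cast h1.trans h2
      have hcS : c / 10 * (nE G₀ S U : ℝ) ≤ c / 10 * (nE G S univ : ℝ) :=
        mul_le_mul_of_nonneg_left hSUvol (by positivity)
      have hratio : c / 10 * (nE G S univ : ℝ) = c * (nE G S univ : ℝ) / 10 := by ring
      have hSvol : c * (nE G S univ : ℝ) < 100 * m / 27 := by linarith
      have hScard3 : (3 : ℝ) * (S.card : ℝ) ≤ (nE G S univ : ℝ) := by
        exact_mod_cast h_volG_ge S
      have hcScard : c * (S.card : ℝ) < 100 * m / 81 := by
        have h1 : c * ((3 : ℝ) * (S.card : ℝ)) ≤ c * (nE G S univ : ℝ) :=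
          mul_le_mul_of_nonneg_left hScard3 hc0.le
        nlinarith
      -- size of the new deleted set
      have hD'card : ((univ \ (U \ S)).card : ℝ) ≤ ((univ \ U).card : ℝ) + (S.card : ℝ) := by
        rw [hD']
        exact_mod_cast Finset.card_union_le _ _
      have hcD' : c * ((univ \ (U \ S)).card : ℝ) < 190 * m / 81 := by
        have h1 : c * ((univ \ (U \ S)).card : ℝ)
            ≤ c * (((univ \ U).card : ℝ) + (S.card : ℝ)) :=
          mul_le_mul_of_nonneg_left hD'card hc0.le
        have h2 : c * (((univ \ U).card : ℝ) + (S.card : ℝ))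
            = c * ((univ \ U).card : ℝ) + c * (S.card : ℝ) := by ring
        linarith
      have hD'le : ((univ \ (U \ S)).card : ℝ) ≤ 19 * (N : ℝ) / 810 := by
        have h1 : c * ((univ \ (U \ S)).card : ℝ) ≤ c * (19 * (N : ℝ) / 810) := by
          have h2 : c * (19 * (N : ℝ) / 810) = 19 * (c * (N : ℝ)) / 810 := by ring
          have h3 : (m : ℝ) ≤ c * (N : ℝ) / 100 := hmc
          calc c * ((univ \ (U \ S)).card : ℝ) ≤ 190 * m / 81 := le_of_lt hcD'
            _ ≤ c * (19 * (N : ℝ) / 810) := by rw [h2]; linarith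
        exact le_of_mul_le_mul_left h1 hc0
      have hD'2 : 2 * (univ \ (U \ S)).card ≤ N := by
        have : (2 * (univ \ (U \ S)).card : ℝ) ≤ (N : ℝ) := by push_cast; linarith
        exact_mod_cast this
      have hsize' := (hsmall (U \ S) hInv' hD'2).2.1
      -- recursion
      have hlt : (U \ S).card < n := by
        rw [← hUcard]
        exact Finset.card_lt_card (Finset.sdiff_ssubset hSU hSne)
      obtain ⟨U', hU'sub, hrest⟩ := IH (U \ S).card hlt (U \ S) rfl hInv' hsize'
      exact ⟨U', hU'sub.trans Finset.sdiff_subset, hrest⟩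
    · by_cases h2 : ∃ v ∈ U, nE G₀ {v} U ≤ 1
      · obtain ⟨v, hvU, hvdeg⟩ := h2
        have hSU : {v} ⊆ U := Finset.singleton_subset_iff.2 hvU
        have hdisjDU : Disjoint (univ \ U) U := Finset.sdiff_disjoint
        have hdisjDS : Disjoint (univ \ U) {v} := hdisjDU.mono_right hSU
        have hD' : univ \ (U \ {v}) = (univ \ U) ∪ {v} := h_compl_sdiff {v} U hSU
        have eq1 : nE G₀ (univ \ (U \ {v})) (U \ {v})
            = nE G₀ (univ \ U) (U \ {v}) + nE G₀ {v} (U \ {v}) := by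
          rw [hD', nE_union_left _ _ hdisjDS]
        have eq2 : nE G₀ (univ \ U) U
            = nE G₀ (univ \ U) (U \ {v}) + nE G₀ (univ \ U) {v} := by
          have h := nE_union_right G₀ (univ \ U)
            (Finset.sdiff_disjoint : Disjoint (U \ {v}) {v})
          rwa [Finset.sdiff_union_of_subset hSU] at h
        have eq2' : nE G₀ {v} U = nE G₀ {v} (U \ {v}) + nE G₀ {v} {v} := by
          have h := nE_union_right G₀ {v}
            (Finset.sdiff_disjoint : Disjoint (U \ {v}) {v})
          rwa [Finset.sdiff_union_of_subset hSU] at h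
        have eq2'' : nE G₀ {v} U = nE G₀ {v} (U \ {v}) := by
          rw [eq2', nE_singleton_self]
          omega
        have eq3 : nE G₀ {v} univ = nE G₀ {v} U + nE G₀ {v} (univ \ U) := by
          have h := nE_union_right G₀ {v}
            (Finset.disjoint_sdiff : Disjoint U (univ \ U))
          rwa [Finset.union_sdiff_of_subset (Finset.subset_univ U)] at h
        have eq4 : nE G₀ (univ \ (U \ {v})) univ
            = nE G₀ (univ \ U) univ + nE G₀ {v} univ := by
          rw [hD', nE_union_left _ _ hdisjDS]
        have eq5 : nE R (univ \ (U \ {v})) univ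
            = nE R (univ \ U) univ + nE R {v} univ := by
          rw [hD', nE_union_left _ _ hdisjDS]
        have eq6 : nE G₀ (univ \ U) {v} = nE G₀ {v} (univ \ U) := nE_symm _ _ _
        have eq7 : nE G {v} univ = nE G₀ {v} univ + nE R {v} univ := h_split {v} univ
        have eq8 := h_degG v
        -- invariant for U \ {v}
        have hInv' : Inv (U \ {v}) := by
          rw [hInvDef]
          dsimp only
          have e1 : (nE G₀ (univ \ (U \ {v})) (U \ {v}) : ℝ)
              = (nE G₀ (univ \ U) (U \ {v}) : ℝ) + (nE G₀ {v} (U \ {v}) : ℝ) := by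
            exact_mod_cast eq1
          have e2 : (nE G₀ (univ \ U) U : ℝ)
              = (nE G₀ (univ \ U) (U \ {v}) : ℝ) + (nE G₀ {v} (univ \ U) : ℝ) := by
            rw [← (by exact_mod_cast congrArg (Nat.cast (R := ℝ)) eq6 :
              (nE G₀ (univ \ U) {v} : ℝ) = (nE G₀ {v} (univ \ U) : ℝ))]
            exact_mod_cast eq2
          have e2'' : (nE G₀ {v} U : ℝ) = (nE G₀ {v} (U \ {v}) : ℝ) := by exact_mod_cast eq2''
          have e3 : (nE G₀ {v} univ : ℝ) = (nE G₀ {v} U : ℝ) + (nE G₀ {v} (univ \ U) : ℝ) := by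
            exact_mod_cast eq3
          have e4 : (nE G₀ (univ \ (U \ {v})) univ : ℝ)
              = (nE G₀ (univ \ U) univ : ℝ) + (nE G₀ {v} univ : ℝ) := by exact_mod_cast eq4
          have e5 : (nE R (univ \ (U \ {v})) univ : ℝ)
              = (nE R (univ \ U) univ : ℝ) + (nE R {v} univ : ℝ) := by exact_mod_cast eq5
          have e7 : (nE G {v} univ : ℝ) = (nE G₀ {v} univ : ℝ) + (nE R {v} univ : ℝ) := by
            exact_mod_cast eq7
          have e8 : (3 : ℝ) ≤ (nE G {v} univ : ℝ) := by exact_mod_cast eq8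
          have ed : (nE G₀ {v} U : ℝ) ≤ 1 := by exact_mod_cast hvdeg
          have hI : (nE G₀ (univ \ U) U : ℝ)
              ≤ c / 10 * (nE G₀ (univ \ U) univ : ℝ) + (nE R (univ \ U) univ : ℝ) := hInv
          have he4 : c / 10 * (nE G₀ (univ \ (U \ {v})) univ : ℝ)
              = c / 10 * (nE G₀ (univ \ U) univ : ℝ) + c / 10 * (nE G₀ {v} univ : ℝ) := by
            rw [e4]; ring
          have hnn : (0 : ℝ) ≤ c / 10 * (nE G₀ {v} univ : ℝ) := by positivity
          linarith
        have hD'card : ((univ \ (U \ {v})).card : ℝ) ≤ ((univ \ U).card : ℝ) + 1 := by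
          have h2 : (univ \ (U \ {v})).card ≤ (univ \ U).card + 1 := by
            rw [hD']
            exact (Finset.card_union_le _ _).trans (by simp)
          exact_mod_cast h2
        have hD'2 : 2 * (univ \ (U \ {v})).card ≤ N := by
          have : (2 * (univ \ (U \ {v})).card : ℝ) ≤ (N : ℝ) := by
            push_cast
            linarith
          exact_mod_cast this
        have hsize' := (hsmall (U \ {v}) hInv' hD'2).2.1
        have hlt : (U \ {v}).card < n := by
          rw [← hUcard]
          exact Finset.card_lt_card (Finset.sdiff_ssubset hSU (Finset.singleton_nonempty v))
        obtain ⟨U', hU'sub, hrest⟩ := IH (U \ {v}).card hlt (U \ {v}) rfl hInv' hsize'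
        exact ⟨U', hU'sub.trans Finset.sdiff_subset, hrest⟩
      · push_neg at h1 h2
        refine ⟨U, subset_rfl, hInv, hsize, ?_, ?_⟩
        · intro S hS hne hcard2
          exact not_lt.1 fun hlt => absurd (h1 S hS hne hcard2) (not_le.2 hlt)
        · intro v hv
          exact h2 v hv

  -- base case application
  have hInvUniv : Inv univ := by
    rw [hInvDef]
    simp only [Finset.sdiff_self, nE_empty_left, Nat.cast_zero, mul_zero, add_zero, le_refl]
  have hSizeUniv : c * (((univ : Finset V) \ univ).card : ℝ) ≤ 10 * m / 9 := by
    simp only [Finset.sdiff_self, Finset.card_empty, Nat.cast_zero, mul_zero]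
    linarith
  obtain ⟨U', -, hInv', hsize', hdone1, hdone2⟩ := main (univ.card) univ rfl hInvUniv hSizeUniv
  -- final facts about U'
  have hD'le : ((univ \ U').card : ℝ) ≤ (N : ℝ) / 90 := by
    have h1 : c * ((univ \ U').card : ℝ) ≤ c * ((N : ℝ) / 90) := by
      have h2 : c * ((N : ℝ) / 90) = (c * (N : ℝ)) / 90 := by ring
      rw [h2]; linarith
    exact le_of_mul_le_mul_left h1 hc0
  have hD'2 : 2 * (univ \ U').card ≤ N := by
    have : (2 * (univ \ U').card : ℝ) ≤ (N : ℝ) := by push_cast; linarith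
    exact_mod_cast this
  have hb₀' : (nE G₀ (univ \ U') U' : ℝ) ≤ 7 * m / 3 := (hsmall U' hInv' hD'2).2.2
  have hUNcard : ((univ \ U').card : ℝ) + (U'.card : ℝ) = (N : ℝ) := by
    have h := Finset.card_sdiff_add_card_eq_card (Finset.subset_univ U')
    rw [h_NcardV] at h
    exact_mod_cast h
  have hU'half : (N : ℝ) / 2 ≤ (U'.card : ℝ) := by linarith
  set G' : SimpleGraph ↥U' := SimpleGraph.comap (fun u : ↥U' => (u : V)) G₀ with hG'def
  have hdegtrans : ∀ v : ↥U', Nat.card (G'.neighborSet v) = nE G₀ {(v : V)} U' := by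
    intro v
    rw [nat_card_neighborSet, nE_singleton, nE_singleton]
    convert card_subtype_filter U' (fun x => G₀.Adj ↑v x)
    exact Iff.rfl
  refine ⟨U', G', ?_, hU'half, ?_, ?_, ?_⟩
  · intro a b hab
    have h2 : G₀.Adj ↑a ↑b := hab
    have h3 := SimpleGraph.deleteEdges_adj.mp h2
    exact ⟨h3.1, fun hc => h3.2 (Finset.mem_coe.2 hc)⟩
  · intro v
    rw [hdegtrans v]
    exact hdone2 ↑v v.2
  · -- many vertices of degree at least 3
    have hcount : Nat.card {v : ↥U' // 3 ≤ Nat.card (G'.neighborSet v)}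
        = (U'.filter fun x => 3 ≤ nE G₀ {x} U').card := by
      rw [Nat.card_eq_fintype_card, Fintype.card_subtype]
      have h1 : ((univ : Finset ↥U').filter fun v : ↥U' => 3 ≤ Nat.card (G'.neighborSet v))
          = ((univ : Finset ↥U').filter fun v : ↥U' =>
              (fun x => 3 ≤ nE G₀ {x} U') ↑v) := by
        refine Finset.filter_congr fun v _ => by rw [hdegtrans v]
      rw [h1]
      exact card_subtype_filter U' (fun x => 3 ≤ nE G₀ {x} U')
    have hsplitGB := Finset.card_filter_add_card_filter_not
      (s := U') (p := fun x => 3 ≤ nE G₀ {x} U')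
    have hBadsub : (U'.filter fun x => ¬ 3 ≤ nE G₀ {x} U')
        ⊆ ((univ : Finset V).filter fun x => 1 ≤ nE R {x} univ)
          ∪ (U'.filter fun x => 1 ≤ nE G₀ {x} (univ \ U')) := by
      intro x hx
      simp only [Finset.mem_filter, Finset.mem_union, Finset.mem_univ, true_and] at hx ⊢
      obtain ⟨hxU, hxdeg⟩ := hx
      by_contra hcon
      push_neg at hcon
      obtain ⟨h1, h2⟩ := hcon
      have hd0 := h2 hxU
      have e7 : nE G {x} univ = nE G₀ {x} univ + nE R {x} univ := h_split {x} univ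
      have e3 : nE G₀ {x} univ = nE G₀ {x} U' + nE G₀ {x} (univ \ U') := by
        have h := nE_union_right G₀ {x} (Finset.disjoint_sdiff : Disjoint U' (univ \ U'))
        rwa [Finset.union_sdiff_of_subset (Finset.subset_univ U')] at h
      have e8 := h_degG x
      omega
    have hB1 : ((univ : Finset V).filter fun x => 1 ≤ nE R {x} univ).card ≤ 2 * m := by
      have h1 := card_filter_one_le_sum (fun x => nE R {x} univ) univ
      have h2 : ∑ x ∈ univ, nE R {x} univ = nE R univ univ :=
        (nE_eq_sum_singleton R univ univ).symm
      omega
    have hB2 : (U'.filter fun x => 1 ≤ nE G₀ {x} (univ \ U')).card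
        ≤ nE G₀ (univ \ U') U' := by
      have h1 := card_filter_one_le_sum (fun x => nE G₀ {x} (univ \ U')) U'
      have h2 : ∑ x ∈ U', nE G₀ {x} (univ \ U') = nE G₀ U' (univ \ U') :=
        (nE_eq_sum_singleton G₀ U' (univ \ U')).symm
      have h3 : nE G₀ U' (univ \ U') = nE G₀ (univ \ U') U' := nE_symm _ _ _
      omega
    have hBadcard : ((U'.filter fun x => ¬ 3 ≤ nE G₀ {x} U').card : ℝ)
        ≤ 2 * m + 7 * m / 3 := by
      have h0 : (U'.filter fun x => ¬ 3 ≤ nE G₀ {x} U').card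
          ≤ ((univ : Finset V).filter fun x => 1 ≤ nE R {x} univ).card
            + (U'.filter fun x => 1 ≤ nE G₀ {x} (univ \ U')).card :=
        (Finset.card_le_card hBadsub).trans (Finset.card_union_le _ _)
      have h4 : ((U'.filter fun x => ¬ 3 ≤ nE G₀ {x} U').card : ℝ)
          ≤ 2 * m + (nE G₀ (univ \ U') U' : ℝ) := by
        have := h0.trans (Nat.add_le_add hB1 hB2)
        exact_mod_cast this
      linarith
    have hmN : (m : ℝ) ≤ (N : ℝ) / 100 := by nlinarith
    have hGBR : ((U'.filter fun x => 3 ≤ nE G₀ {x} U').card : ℝ)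
        + ((U'.filter fun x => ¬ 3 ≤ nE G₀ {x} U').card : ℝ) = (U'.card : ℝ) := by
      exact_mod_cast hsplitGB
    rw [hcount]
    linarith
  · -- expander
    intro S' hS'ne hS'card
    set S := S'.image (fun u : ↥U' => (u : V)) with hSdef
    have hinj : ∀ x ∈ S', ∀ y ∈ S', ((x : ↥U') : V) = ((y : ↥U') : V) → x = y :=
      fun x _ y _ h => Subtype.ext h
    have hSU : S ⊆ U' := by
      intro x hx
      obtain ⟨u, _, rfl⟩ := Finset.mem_image.1 hx
      exact u.2
    have hScardeq : S.card = S'.card :=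
      Finset.card_image_of_injOn fun x _ y _ h => Subtype.ext h
    have hSne : S.Nonempty := hS'ne.image _
    have h2' : 2 * S.card ≤ U'.card := by
      rw [hScardeq]
      rwa [Fintype.card_coe] at hS'card
    have hmain := hdone1 S hSU hSne h2'
    have hvolnat : ∑ v ∈ S', Nat.card (G'.neighborSet v) = nE G₀ S U' := by
      have h1 : ∑ v ∈ S', Nat.card (G'.neighborSet v) = ∑ v ∈ S', nE G₀ {(v : V)} U' :=
        Finset.sum_congr rfl fun v _ => hdegtrans v
      have h2 : ∑ x ∈ S, nE G₀ {x} U' = ∑ v ∈ S', nE G₀ {(v : V)} U' :=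
        Finset.sum_image hinj
      have h3 : nE G₀ S U' = ∑ x ∈ S, nE G₀ {x} U' := nE_eq_sum_singleton _ _ _
      rw [h1, ← h2, ← h3]
    have hvol : ∑ v ∈ S', (Nat.card (G'.neighborSet v) : ℝ) = (nE G₀ S U' : ℝ) := by
      exact_mod_cast congrArg (Nat.cast (R := ℝ)) hvolnat
    have hboundnat : Nat.card (edgeBoundary G' ↑S') = nE G₀ S (U' \ S) := by
      rw [nat_card_edgeBoundary]
      have hper : ∀ a : ↥U', ((univ \ S').filter fun b : ↥U' => G'.Adj a b).card
          = ((U' \ S).filter fun b => G₀.Adj ↑a b).card := by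
        intro a
        have h1 : ((univ \ S').filter fun b : ↥U' => G'.Adj a b)
            = ((univ : Finset ↥U').filter fun (u : ↥U') =>
                (fun x => x ∈ U' \ S ∧ G₀.Adj ↑a x) ↑u) := by
          ext u
          simp only [Finset.mem_filter, Finset.mem_sdiff, Finset.mem_univ, true_and]
          constructor
          · rintro ⟨hu, hadj⟩
            refine ⟨⟨u.2, fun hc => hu ?_⟩, hadj⟩
            obtain ⟨w, hw, hweq⟩ := Finset.mem_image.1 hc
            exact (Subtype.ext hweq : w = u) ▸ hw
          · rintro ⟨⟨_, hnS⟩, hadj⟩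
            exact ⟨fun hc => hnS (Finset.mem_image_of_mem _ hc), hadj⟩
        rw [h1]
        have h5 := card_subtype_filter U' (fun x => x ∈ U' \ S ∧ G₀.Adj ↑a x)
        have h6 : (U'.filter fun x => x ∈ U' \ S ∧ G₀.Adj ↑a x)
            = ((U' \ S).filter fun b => G₀.Adj ↑a b) := by
          ext x
          simp only [Finset.mem_filter, Finset.mem_sdiff]
          tauto
        rw [h6] at h5
        exact h5
      have h2 : nE G' S' (univ \ S')
          = ∑ a ∈ S', ((U' \ S).filter fun b => G₀.Adj ↑a b).card := by
        rw [nE_eq_sum_singleton]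
        refine Finset.sum_congr rfl fun a _ => ?_
        rw [nE_singleton]
        convert hper a
      have h3 : nE G₀ S (U' \ S)
          = ∑ a ∈ S', ((U' \ S).filter fun b => G₀.Adj ↑a b).card := by
        rw [nE_eq_sum_singleton]
        have h4 : ∑ x ∈ S, nE G₀ {x} (U' \ S) = ∑ a ∈ S', nE G₀ {((a : ↥U') : V)} (U' \ S) :=
          Finset.sum_image hinj
        rw [h4]
        refine Finset.sum_congr rfl fun a _ => ?_
        rw [nE_singleton]
        congr!
      rw [h2, ← h3]
    rw [hvol, hboundnat]
    exact hmain
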